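/- For each Mathias condition (s,A), let U_{(s,A)} be the set of all restrictions χ_a^n ↾ k, where a ranges over finite sets with s ⊆ a ⊆ s ∪ A, k ≤ n < ω, and χ_a^n denotes the characteristic function of a on {0,…,n−1}. Then (s,A) ≤ (t,B) in Mathias forcing if and only if U_{(s,A)} ⊆ U_{(t,B)}. -/
import Mathlib


/-- A Mathias condition: a finite set `s`, an infinite set `A`, `max s < min A`. -/
def IsMathiasCond (s : Finset ℕ) (A : Set ℕ) : Prop :=
  A.Infinite ∧ ∀ m ∈ s, ∀ n ∈ A, m < n

/-- The order of Mathias forcing: `(s,A) ≤ (t,B)` iff `t ⊆ s`, `A ⊆ B` and `s ∖ t ⊆ B`. -/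
def MathiasLe (s : Finset ℕ) (A : Set ℕ) (t : Finset ℕ) (B : Set ℕ) : Prop :=
  t ⊆ s ∧ A ⊆ B ∧ ((s : Set ℕ) \ (t : Set ℕ)) ⊆ B

/-- `χ_a^n`: the characteristic function of the finite set `a` on `{0,…,n-1}`,
as a binary sequence of length `n`. -/
def charFn (a : Finset ℕ) (n : ℕ) : List Bool :=
  List.ofFn fun i : Fin n => decide ((i : ℕ) ∈ a)

/-- `U_{(s,A)}`: all restrictions `χ_a^n ↾ k` with `a` finite, `a ⊆ n`,
`s ⊆ a ⊆ s ∪ A` and `k ≤ n`. -/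
def MathiasU (s : Finset ℕ) (A : Set ℕ) : Set (List Bool) :=
  {l | ∃ (a : Finset ℕ) (n k : ℕ), k ≤ n ∧ (∀ m ∈ a, m < n) ∧
    (s : Set ℕ) ⊆ (a : Set ℕ) ∧ (a : Set ℕ) ⊆ (s : Set ℕ) ∪ A ∧ l = (charFn a n).take k}

lemma charFn_length (a : Finset ℕ) (n : ℕ) : (charFn a n).length = n := by
  simp [charFn]

lemma mem_U_ext {t : Finset ℕ} {B : Set ℕ} {a : Finset ℕ} {n : ℕ}
    (h : charFn a n ∈ MathiasU t B) :
    ∃ a' : Finset ℕ, (t : Set ℕ) ⊆ (a' : Set ℕ) ∧ (a' : Set ℕ) ⊆ (t : Set ℕ) ∪ B ∧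
      ∀ i < n, (i ∈ a ↔ i ∈ a') := by
  obtain ⟨a', n', k', hk, _, ht, htB, heq⟩ := h
  refine ⟨a', ht, htB, ?_⟩
  have hlen : n = min k' n' := by
    have := congrArg List.length heq
    simpa [charFn_length] using this
  intro i hi
  have hi' : i < (List.take k' (charFn a' n')).length := by
    rw [List.length_take, charFn_length]; omega
  have h1 : (charFn a n)[i]'(by rw [charFn_length]; exact hi) =
      (List.take k' (charFn a' n'))[i]'hi' := by
    simp only [heq]
  rw [List.getElem_take] at h1
  have hin' : i < n' := by omega
  simp only [charFn, List.getElem_ofFn] at h1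
  simpa using h1

theorem mathias_charFn_tree_order_iso (s t : Finset ℕ) (A B : Set ℕ)
    (hsA : IsMathiasCond s A) (htB : IsMathiasCond t B) :
    MathiasLe s A t B ↔ MathiasU s A ⊆ MathiasU t B := by
  constructor
  · rintro ⟨hts, hAB, hst⟩ l ⟨a, n, k, hk, han, hsa, hasA, hl⟩
    refine ⟨a, n, k, hk, han, ?_, ?_, hl⟩
    · exact fun x hx => hsa (by exact_mod_cast hts (by exact_mod_cast hx))
    · intro x hx
      rcases hasA hx with hxs | hxA
      · by_cases hxt : x ∈ t
        · exact Or.inl (by exact_mod_cast hxt)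
        · exact Or.inr (hst ⟨hxs, by exact_mod_cast hxt⟩)
      · exact Or.inr (hAB hxA)
  · intro hU
    -- pick N bounding s ∪ t
    obtain ⟨N, hN⟩ := (s ∪ t).exists_nat_subset_range
    have hbound : ∀ m ∈ s ∪ t, m < N := fun m hm => Finset.mem_range.mp (hN hm)
    have hmemU : charFn s N ∈ MathiasU s A := by
      refine ⟨s, N, N, le_refl _, fun m hm => hbound m (Finset.mem_union_left _ hm),
        subset_refl _, Set.subset_union_left, ?_⟩
      rw [List.take_of_length_le (by rw [charFn_length])]
    obtain ⟨a', ht', htB', hiff⟩ := mem_U_ext (hU hmemU)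
    have hts : t ⊆ s := by
      intro m hm
      have hmN : m < N := hbound m (Finset.mem_union_right _ hm)
      exact (hiff m hmN).mpr (by exact_mod_cast ht' (by exact_mod_cast hm))
    have hstB : ((s : Set ℕ) \ (t : Set ℕ)) ⊆ B := by
      rintro m ⟨hms, hmt⟩
      have hms' : m ∈ s := by exact_mod_cast hms
      have hmN : m < N := hbound m (Finset.mem_union_left _ hms')
      have : m ∈ a' := (hiff m hmN).mp hms'
      rcases htB' (by exact_mod_cast this) with h | h
      · exact absurd h hmt
      · exact h
    refine ⟨hts, ?_, hstB⟩
    intro x hxA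
    obtain ⟨M, hM⟩ := (insert x s).exists_nat_subset_range
    have hMb : ∀ m ∈ insert x s, m < M := fun m hm => Finset.mem_range.mp (hM hm)
    have hmemU2 : charFn (insert x s) M ∈ MathiasU s A := by
      refine ⟨insert x s, M, M, le_refl _, hMb, ?_, ?_, ?_⟩
      · intro m hm; exact_mod_cast Finset.mem_insert_of_mem (by exact_mod_cast hm)
      · intro m hm
        rcases Finset.mem_insert.mp (by exact_mod_cast hm) with rfl | h
        · exact Or.inr hxA
        · exact Or.inl (by exact_mod_cast h)
      · rw [List.take_of_length_le (by rw [charFn_length])]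
    obtain ⟨a2, ht2, htB2, hiff2⟩ := mem_U_ext (hU hmemU2)
    have hx2 : x ∈ a2 := (hiff2 x (hMb x (Finset.mem_insert_self _ _))).mp
      (Finset.mem_insert_self _ _)
    rcases htB2 (by exact_mod_cast hx2) with h | h
    · exfalso
      have hxs : x ∈ s := hts (by exact_mod_cast h)
      exact lt_irrefl x (hsA.2 x hxs x hxA)
    · exact h
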